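/- Elimination identity for the sine–Gordon multisymplectic Euler scheme: suppose real sequences $\varphi_{a,b}, \pi^0_{a,b}, \pi^1_{a,b}$ (indexed by integers $a, b$) satisfy, for all $a, b$: $\varphi_{a+1,b} = \varphi_{a,b} + \Delta t\, \pi^0_{a,b}$; $\pi^0_{a+1,b} = \pi^0_{a,b} + \Delta t\, X_{a,b-1}$ and $\pi^1_{a+1,b} = \pi^1_{a+1,b-1} + \Delta x\, Y_{a,b-1}$ where $X_{a,b} + Y_{a,b} = -\sin(\varphi_{a+1,b+1})$; and $\varphi_{a+1,b+1} = \varphi_{a+1,b} - \Delta x\, \pi^1_{a+1,b}$. Then for all $a,b$: $\pi^0_{a+1,b} = \pi^0_{a,b} + \Delta t\, \frac{\varphi_{a+1,b+1} - 2\varphi_{a+1,b} + \varphi_{a+1,b-1}}{\Delta x^2} - \Delta t\, \sin(\varphi_{a+1,b})$. -/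
import Mathlib


/-- Elimination identity for the sine–Gordon multisymplectic Euler scheme: eliminating
the internal stage variables `X, Y` and the spatial momenta `π¹` from the one-stage
multisymplectic partitioned Runge–Kutta scheme yields the explicit scheme combining the
standard discrete Laplacian in space with the adjoint symplectic Euler method in time. -/
theorem sineGordon_MSE_elimination
    (Δt Δx : ℝ) (hΔt : 0 < Δt) (hΔx : 0 < Δx)
    (φ π0 π1 X Y : ℤ → ℤ → ℝ)
    (h1 : ∀ a b, φ (a + 1) b = φ a b + Δt * π0 a b)
    (h2 : ∀ a b, π0 (a + 1) b = π0 a b + Δt * X a (b - 1))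
    (h3 : ∀ a b, π1 (a + 1) b = π1 (a + 1) (b - 1) + Δx * Y a (b - 1))
    (h4 : ∀ a b, X a b + Y a b = -Real.sin (φ (a + 1) (b + 1)))
    (h5 : ∀ a b, φ (a + 1) (b + 1) = φ (a + 1) b - Δx * π1 (a + 1) b) :
    ∀ a b, π0 (a + 1) b = π0 a b
        + Δt * ((φ (a + 1) (b + 1) - 2 * φ (a + 1) b + φ (a + 1) (b - 1)) / Δx ^ 2)
        - Δt * Real.sin (φ (a + 1) b) := by
  intro a b
  have hx : Δx ≠ 0 := hΔx.ne'
  have hb : b - 1 + 1 = b := by ring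
  have e5b := h5 a b
  have e5b' := h5 a (b - 1); rw [hb] at e5b'
  have e3 := h3 a b
  have e2 := h2 a b
  have e4 := h4 a (b - 1); rw [hb] at e4
  have hY : (φ (a + 1) (b + 1) - 2 * φ (a + 1) b + φ (a + 1) (b - 1)) / Δx ^ 2
      = -(Y a (b - 1)) := by
    field_simp
    linear_combination e5b - e5b' - Δx * e3
  have hX : X a (b - 1) = -Real.sin (φ (a + 1) b) - Y a (b - 1) := by linarith
  rw [e2, hY, hX]; ring
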